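/- Let K ∈ ℕ and N ≥ 1, and let x̄ ∈ ℝ^S and an alphabet x̄₁, …, x̄_N ∈ ℝ^S be given, with average μ̄ := (1/N) Σ_{s=1}^{N} x̄_s. Let N₀, …, N_K : Ω → ℝ^S be square-integrable random vectors each with mean μ_TX and covariance C_TX, let S₁, …, S_K : Ω → Fin N be random variables with P(S_κ = s) = 1/N for all s, and suppose the family (N₀, …, N_K, S₁, …, S_K) is mutually independent. Define X₀ := x̄ + N₀ and X_κ := x̄_{S_κ} + N_κ for κ ≥ 1, and let H₀, …, H_K be S×S real matrices. Then Y := Σ_{κ=0}^{K} H_κ · X_κ satisfies E[Y] = H₀ · x̄ + Σ_{κ=1}^{K} H_κ · μ̄ + Σ_{κ=0}^{K} H_κ · μ_TX and Cov[Y] = Σ_{κ=0}^{K} H_κ · C_TX · H_κᵀ + Σ_{κ=1}^{K} H_κ · ( (1/N) Σ_{s=1}^{N} (x̄_s − μ̄)(x̄_s − μ̄)ᵀ ) · H_κᵀ. (Paper's Corollary to Proposition 3 for signal-independent Gaussian-type noise, eqs. (18a)–(18b): the covariance splits into a transmitter-noise part and a symbol-uncertainty part.) -/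

import Mathlib

open MeasureTheory ProbabilityTheory Matrix

/-- The mean of a random vector, taken componentwise. -/
noncomputable def vmean {Ω : Type*} [MeasurableSpace Ω] {d : ℕ}
    (P : Measure Ω) (X : Ω → Fin d → ℝ) : Fin d → ℝ :=
  fun i => ∫ ω, X ω i ∂P

/-- The covariance matrix of a random vector. -/
noncomputable def vcov {Ω : Type*} [MeasurableSpace Ω] {d : ℕ}
    (P : Measure Ω) (X : Ω → Fin d → ℝ) : Matrix (Fin d) (Fin d) ℝ :=
  Matrix.of fun i j => ∫ ω, (X ω i - vmean P X i) * (X ω j - vmean P X j) ∂P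

section Aux

variable {Ω : Type*} [MeasurableSpace Ω] {P : Measure Ω} [IsProbabilityMeasure P]

/-- Each fiber of a uniformly distributed discrete random variable is a.e. equal to its
measurable hull. -/
lemma uniform_fiber_ae_eq {N : ℕ} (hN : 1 ≤ N) (Sig : Ω → Fin N)
    (hunif : ∀ s, P {ω | Sig ω = s} = (N : ENNReal)⁻¹) (s : Fin N) :
    {ω | Sig ω = s} =ᵐ[P] toMeasurable P {ω | Sig ω = s} := by
  classical
  set A : Fin N → Set Ω := fun t => {ω | Sig ω = t} with hA
  set T : Fin N → Set Ω := fun t => toMeasurable P (A t) with hT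
  have hNe : (N : ENNReal) ≠ 0 := Nat.cast_ne_zero.mpr (by omega)
  have hTmeas : ∀ t, MeasurableSet (T t) := fun t => measurableSet_toMeasurable _ _
  have hPA : ∀ t, P (A t) = (N : ENNReal)⁻¹ := fun t => hunif t
  have hPT : ∀ t, P (T t) = (N : ENNReal)⁻¹ := fun t => by
    rw [hT, measure_toMeasurable, hPA]
  have hsubT : ∀ t, A t ⊆ T t := fun t => subset_toMeasurable _ _
  have hinv_ne_top : ((N : ENNReal))⁻¹ ≠ ⊤ := ENNReal.inv_ne_top.2 hNe
  have hinter : ∀ t u, t ≠ u → P (T t ∩ T u) = 0 := by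
    intro t u htu
    have hcompl_sub : (T t ∪ T u)ᶜ ⊆
        ⋃ v ∈ ((Finset.univ.erase t).erase u : Finset (Fin N)), A v := by
      intro ω hω
      simp only [Set.mem_compl_iff, Set.mem_union, not_or] at hω
      refine Set.mem_biUnion ?_ (show ω ∈ A (Sig ω) from rfl)
      refine Finset.mem_erase.2 ⟨?_, Finset.mem_erase.2 ⟨?_, Finset.mem_univ _⟩⟩
      · rintro rfl; exact hω.2 (hsubT _ rfl)
      · rintro rfl; exact hω.1 (hsubT _ rfl)
    have hcompl_le : P ((T t ∪ T u)ᶜ) ≤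
        ∑ v ∈ (Finset.univ.erase t).erase u, (N : ENNReal)⁻¹ := by
      refine le_trans (measure_mono hcompl_sub) ?_
      refine le_trans (measure_biUnion_finset_le _ _) ?_
      exact Finset.sum_le_sum fun v _ => le_of_eq (hPA v)
    set R : ENNReal := ∑ _v ∈ (Finset.univ.erase t).erase u, (N : ENNReal)⁻¹ with hR
    have hRtop : R ≠ ⊤ := by
      rw [hR, Finset.sum_const, nsmul_eq_mul]
      exact ENNReal.mul_ne_top (by simp) hinv_ne_top
    have hu_mem : u ∈ Finset.univ.erase t := Finset.mem_erase.2 ⟨Ne.symm htu, Finset.mem_univ _⟩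
    have hN2 : 2 ≤ N := by
      have h := Fintype.one_lt_card_iff_nontrivial.2 ⟨⟨t, u, Ne.symm (Ne.symm htu)⟩⟩
      simp at h; omega
    have hcard : ((Finset.univ.erase t).erase u).card = N - 2 := by
      rw [Finset.card_erase_of_mem hu_mem, Finset.card_erase_of_mem (Finset.mem_univ t),
        Finset.card_univ, Fintype.card_fin]
      omega
    have hsum1 : (N : ENNReal)⁻¹ + ((N : ENNReal)⁻¹ + R) = 1 := by
      have hstep : (N : ENNReal)⁻¹ + ((N : ENNReal)⁻¹ + R) = ((N - 2) + 2) • (N : ENNReal)⁻¹ := by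
        rw [hR, Finset.sum_const, hcard, add_nsmul, two_nsmul]
        abel
      rw [hstep, show (N - 2) + 2 = N by omega, nsmul_eq_mul]
      exact ENNReal.mul_inv_cancel hNe (by simp)
    have hunionC : P (T t ∪ T u) + P ((T t ∪ T u)ᶜ) = 1 := by
      rw [measure_add_measure_compl ((hTmeas t).union (hTmeas u)), measure_univ]
    have hge : (N : ENNReal)⁻¹ + (N : ENNReal)⁻¹ ≤ P (T t ∪ T u) := by
      have h1 : (N : ENNReal)⁻¹ + (N : ENNReal)⁻¹ + R ≤ P (T t ∪ T u) + R := by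
        rw [add_assoc, hsum1, ← hunionC]
        exact add_le_add le_rfl hcompl_le
      exact (ENNReal.add_le_add_iff_right hRtop).1 h1
    have hkey : P (T t ∪ T u) + P (T t ∩ T u) = (N : ENNReal)⁻¹ + (N : ENNReal)⁻¹ := by
      rw [measure_union_add_inter _ (hTmeas u), hPT, hPT]
    have hPUtop : P (T t ∪ T u) ≠ ⊤ := (measure_lt_top P _).ne
    have hfin : P (T t ∪ T u) + P (T t ∩ T u) ≤ P (T t ∪ T u) + 0 := by
      rw [add_zero, hkey]; exact hge
    exact le_antisymm ((ENNReal.add_le_add_iff_left hPUtop).1 hfin) zero_le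
  have hdiff : P (T s \ A s) = 0 := by
    have hsub2 : T s \ A s ⊆ ⋃ t ∈ Finset.univ.erase s, (T s ∩ T t) := by
      intro ω hω
      obtain ⟨hωT, hωA⟩ := hω
      exact Set.mem_biUnion (Finset.mem_erase.2 ⟨hωA, Finset.mem_univ _⟩) ⟨hωT, hsubT _ rfl⟩
    refine le_antisymm
      (le_trans (measure_mono hsub2) (le_trans (measure_biUnion_finset_le _ _) ?_)) zero_le
    exact le_of_eq (Finset.sum_eq_zero fun t ht =>
      hinter s t (Ne.symm (Finset.mem_erase.1 ht).1))
  have hAsub : P (A s \ T s) = 0 := by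
    have h : A s \ T s = ∅ := Set.diff_eq_empty.2 (hsubT s)
    rw [h, measure_empty]
  exact (MeasureTheory.ae_eq_set).2 ⟨hAsub, hdiff⟩

/-- Expectation of a function of a uniformly distributed discrete random variable. -/
lemma integral_comp_uniform {N : ℕ} (hN : 1 ≤ N) (Sig : Ω → Fin N)
    (hunif : ∀ s, P {ω | Sig ω = s} = (N : ENNReal)⁻¹) (F : Fin N → ℝ) :
    Integrable (fun ω => F (Sig ω)) P ∧
      ∫ ω, F (Sig ω) ∂P = (N : ℝ)⁻¹ * ∑ s, F s := by
  classical
  have hae := uniform_fiber_ae_eq hN Sig hunif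
  have hpt : ∀ ω, F (Sig ω) = ∑ s, Set.indicator {ω' | Sig ω' = s} (fun _ => F s) ω := by
    intro ω
    simp only [Set.indicator_apply, Set.mem_setOf_eq]
    rw [Finset.sum_ite_eq]
    simp
  have h2 : ∀ᵐ ω ∂P, ∀ s : Fin N,
      Set.indicator {ω' | Sig ω' = s} (fun _ => F s) ω
        = Set.indicator (toMeasurable P {ω' | Sig ω' = s}) (fun _ => F s) ω := by
    rw [MeasureTheory.ae_all_iff]
    exact fun s => indicator_ae_eq_of_ae_eq_set (hae s)
  have haefun : (fun ω => F (Sig ω)) =ᵐ[P]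
      fun ω => ∑ s, Set.indicator (toMeasurable P {ω' | Sig ω' = s}) (fun _ => F s) ω := by
    filter_upwards [h2] with ω hω
    rw [hpt ω]
    exact Finset.sum_congr rfl fun s _ => hω s
  have hint2 : Integrable
      (fun ω => ∑ s, Set.indicator (toMeasurable P {ω' | Sig ω' = s}) (fun _ => F s) ω) P :=
    integrable_finset_sum _ fun s _ =>
      (integrable_const (F s)).indicator (measurableSet_toMeasurable _ _)
  refine ⟨hint2.congr haefun.symm, ?_⟩
  rw [integral_congr_ae haefun,
    integral_finset_sum _ (fun s _ =>
      (integrable_const (F s)).indicator (measurableSet_toMeasurable _ _))]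
  have hone : ∀ s : Fin N,
      ∫ ω, Set.indicator (toMeasurable P {ω' | Sig ω' = s}) (fun _ => F s) ω ∂P
        = (N : ℝ)⁻¹ * F s := by
    intro s
    rw [integral_indicator_const _ (measurableSet_toMeasurable _ _), measureReal_def, measure_toMeasurable,
      hunif]
    simp [ENNReal.toReal_inv]
  rw [Finset.sum_congr rfl fun s _ => hone s, ← Finset.mul_sum]

/-- Quadratic form of a matrix, entrywise. -/
lemma matrix_quad {d : ℕ} (M C : Matrix (Fin d) (Fin d) ℝ) (i j : Fin d) :
    (M * C * Mᵀ) i j = ∑ a, ∑ b, M i a * M j b * C a b := by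
  simp only [Matrix.mul_apply, Matrix.transpose_apply, Finset.sum_mul]
  rw [Finset.sum_comm]
  exact Finset.sum_congr rfl fun a _ => Finset.sum_congr rfl fun b _ => by ring

/-- Quadratic form of a scaled sum of rank-one matrices. -/
lemma matrix_quad_smul {d n : ℕ} (M : Matrix (Fin d) (Fin d) ℝ) (c : ℝ)
    (w : Fin n → Fin d → ℝ) (i j : Fin d) :
    (M * (c • ∑ s, Matrix.vecMulVec (w s) (w s)) * Mᵀ) i j
      = c * ∑ s, M.mulVec (w s) i * M.mulVec (w s) j := by
  have h2 : ∀ s : Fin n, M * Matrix.vecMulVec (w s) (w s) * Mᵀ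
      = Matrix.vecMulVec (M.mulVec (w s)) (M.mulVec (w s)) := by
    intro s
    rw [Matrix.vecMulVec_eq (Fin 1), Matrix.vecMulVec_eq (Fin 1), Matrix.replicateCol_mulVec,
      ← Matrix.vecMul_transpose, Matrix.replicateRow_vecMul]
    simp only [Matrix.mul_assoc]
  have h1 : M * (c • ∑ s, Matrix.vecMulVec (w s) (w s)) * Mᵀ
      = c • ∑ s, Matrix.vecMulVec (M.mulVec (w s)) (M.mulVec (w s)) := by
    rw [mul_smul_comm, smul_mul_assoc, Finset.mul_sum, Finset.sum_mul]
    congr 1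
    exact Finset.sum_congr rfl fun s _ => h2 s
  rw [h1]
  simp [Matrix.sum_apply, Matrix.vecMulVec_apply, Finset.mul_sum]

end Aux

/-- Corollary to Proposition 3 (signal-independent Gaussian-type noise), eqs. (18a)–(18b):
with a fixed current mixture `x̄`, a mixture alphabet `x̄₁, …, x̄_N` with average `μ̄`,
mutually independent noises `N₀, …, N_K` (mean `μ_TX`, covariance `C_TX`) and uniformly
distributed past symbols `S₁, …, S_K`, the received vector
`Y = H₀ (x̄ + N₀) + Σ_{κ≥1} H_κ (x̄_{S_κ} + N_κ)` has mean
`H₀ x̄ + Σ_{κ≥1} H_κ μ̄ + Σ_κ H_κ μ_TX` and its covariance splits into a TX-noise part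
`Σ_κ H_κ C_TX H_κᵀ` and a symbol-uncertainty part
`Σ_{κ≥1} H_κ ((1/N) Σ_s (x̄_s − μ̄)(x̄_s − μ̄)ᵀ) H_κᵀ`. -/
theorem moments_signal_independent_noise_uniform_past_symbols
    {Ω : Type*} [MeasurableSpace Ω] (P : Measure Ω) [IsProbabilityMeasure P]
    {S K N : ℕ} (hN : 1 ≤ N)
    (xbar : Fin S → ℝ) (alphabet : Fin N → Fin S → ℝ)
    (Noise : Fin (K + 1) → Ω → Fin S → ℝ)
    (hNoise2 : ∀ κ, ∀ i, MemLp (fun ω => Noise κ ω i) 2 P)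
    (μTX : Fin S → ℝ) (CTX : Matrix (Fin S) (Fin S) ℝ)
    (hNoiseMean : ∀ κ, vmean P (Noise κ) = μTX)
    (hNoiseCov : ∀ κ, vcov P (Noise κ) = CTX)
    (Sig : Fin K → Ω → Fin N)
    (hSigUnif : ∀ κ, ∀ s, P {ω | Sig κ ω = s} = (N : ENNReal)⁻¹)
    (hindep : iIndepFun
      (β := Sum.elim (fun _ : Fin (K + 1) => Fin S → ℝ) (fun _ : Fin K => Fin N))
      (m := fun i => Sum.rec (fun _ => (inferInstance : MeasurableSpace (Fin S → ℝ)))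
        (fun _ => (inferInstance : MeasurableSpace (Fin N))) i)
      (fun i => Sum.rec (fun κ => Noise κ) (fun κ => Sig κ) i) P)
    (H : Fin (K + 1) → Matrix (Fin S) (Fin S) ℝ) :
    vmean P (fun ω => (H 0).mulVec (xbar + Noise 0 ω) +
          ∑ κ : Fin K, (H κ.succ).mulVec (alphabet (Sig κ ω) + Noise κ.succ ω)) =
        (H 0).mulVec xbar +
          ∑ κ : Fin K, (H κ.succ).mulVec ((N : ℝ)⁻¹ • ∑ s, alphabet s) +
          ∑ κ : Fin (K + 1), (H κ).mulVec μTX ∧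
      vcov P (fun ω => (H 0).mulVec (xbar + Noise 0 ω) +
          ∑ κ : Fin K, (H κ.succ).mulVec (alphabet (Sig κ ω) + Noise κ.succ ω)) =
        ∑ κ : Fin (K + 1), H κ * CTX * (H κ)ᵀ +
          ∑ κ : Fin K,
            H κ.succ *
              ((N : ℝ)⁻¹ • ∑ s,
                Matrix.vecMulVec (alphabet s - (N : ℝ)⁻¹ • ∑ t, alphabet t)
                  (alphabet s - (N : ℝ)⁻¹ • ∑ t, alphabet t)) *
              (H κ.succ)ᵀ := by
  classical
  set μbar : Fin S → ℝ := (N : ℝ)⁻¹ • ∑ s, alphabet s with hμbar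
  set Csym : Matrix (Fin S) (Fin S) ℝ :=
    (N : ℝ)⁻¹ • ∑ s, Matrix.vecMulVec (alphabet s - μbar) (alphabet s - μbar) with hCsym
  set Yf : Ω → Fin S → ℝ := fun ω => (H 0).mulVec (xbar + Noise 0 ω) +
      ∑ κ : Fin K, (H κ.succ).mulVec (alphabet (Sig κ ω) + Noise κ.succ ω) with hYf
  set m : Fin S → ℝ := (H 0).mulVec xbar + ∑ κ : Fin K, (H κ.succ).mulVec μbar +
      ∑ κ : Fin (K + 1), (H κ).mulVec μTX with hm
  -- the centered pieces
  set Z : Fin (K + 1) ⊕ Fin K → Ω → Fin S → ℝ :=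
    Sum.elim (fun κ ω => (H κ).mulVec (Noise κ ω - μTX))
      (fun κ ω => (H κ.succ).mulVec (alphabet (Sig κ ω) - μbar)) with hZ
  set Cm : Fin (K + 1) ⊕ Fin K → Matrix (Fin S) (Fin S) ℝ :=
    Sum.elim (fun κ => H κ * CTX * (H κ)ᵀ) (fun κ => H κ.succ * Csym * (H κ.succ)ᵀ) with hCm
  have hmulVecApply : ∀ (M : Matrix (Fin S) (Fin S) ℝ) (v : Fin S → ℝ) (i : Fin S),
      M.mulVec v i = ∑ a, M i a * v a := fun M v i => rfl
  -- decomposition of Y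
  have hYdecomp : Yf = fun ω => m + ∑ l, Z l ω := by
    funext ω
    rw [hYf, hm, hZ]
    simp only [Fintype.sum_sum_type, Sum.elim_inl, Sum.elim_inr]
    simp only [Matrix.mulVec_add, Matrix.mulVec_sub, Finset.sum_add_distrib,
      Finset.sum_sub_distrib]
    rw [Fin.sum_univ_succ (f := fun κ : Fin (K + 1) => (H κ).mulVec (Noise κ ω)),
      Fin.sum_univ_succ (f := fun κ : Fin (K + 1) => (H κ).mulVec μTX)]
    abel
  -- scalar components of Z, noise part
  have hZL : ∀ (κ : Fin (K + 1)) (i : Fin S),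
      (fun ω => Z (Sum.inl κ) ω i) = fun ω => ∑ a, H κ i a * (Noise κ ω a - μTX a) := by
    intro κ i; funext ω; rw [hZ]; exact hmulVecApply _ _ _
  have hZR : ∀ (κ : Fin K) (i : Fin S),
      (fun ω => Z (Sum.inr κ) ω i)
        = fun ω => (fun s => (H κ.succ).mulVec (alphabet s - μbar) i) (Sig κ ω) := by
    intro κ i; funext ω; rfl
  -- moments of the noise
  have hNmean : ∀ (κ : Fin (K + 1)) (a : Fin S), ∫ ω, Noise κ ω a ∂P = μTX a :=
    fun κ a => congrFun (hNoiseMean κ) a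
  have hNcov : ∀ (κ : Fin (K + 1)) (a b : Fin S),
      ∫ ω, (Noise κ ω a - μTX a) * (Noise κ ω b - μTX b) ∂P = CTX a b := by
    intro κ a b
    have h := congrFun (congrFun (hNoiseCov κ) a) b
    simp only [vcov, Matrix.of_apply] at h
    rw [hNoiseMean κ] at h
    exact h
  have hBmem : ∀ (κ : Fin (K + 1)) (a : Fin S),
      MemLp (fun ω => Noise κ ω a - μTX a) 2 P :=
    fun κ a => (hNoise2 κ a).sub (memLp_const _)
  have hBint : ∀ (κ : Fin (K + 1)) (a : Fin S),
      Integrable (fun ω => Noise κ ω a - μTX a) P :=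
    fun κ a => (hBmem κ a).integrable one_le_two
  have hBBint : ∀ (κ κ' : Fin (K + 1)) (a b : Fin S),
      Integrable (fun ω => (Noise κ ω a - μTX a) * (Noise κ' ω b - μTX b)) P := by
    intro κ κ' a b
    have h3 : MemLp ((fun ω => Noise κ ω a - μTX a) • fun ω => Noise κ' ω b - μTX b) 1 P :=
      (hBmem κ' b).smul (hBmem κ a)
    exact memLp_one_iff_integrable.1 h3
  -- MemLp and integrability of the Z components
  have hZmemL : ∀ (κ : Fin (K + 1)) (i : Fin S), MemLp (fun ω => Z (Sum.inl κ) ω i) 2 P := by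
    intro κ i
    rw [hZL]
    exact memLp_finset_sum _ fun a _ => ((hBmem κ a).const_mul _)
  have hIntL : ∀ (κ : Fin (K + 1)) (i : Fin S), Integrable (fun ω => Z (Sum.inl κ) ω i) P :=
    fun κ i => (hZmemL κ i).integrable one_le_two
  have hIntR : ∀ (κ : Fin K) (i : Fin S), Integrable (fun ω => Z (Sum.inr κ) ω i) P := by
    intro κ i
    rw [hZR]
    exact (integral_comp_uniform hN (Sig κ) (hSigUnif κ)
      (fun s => (H κ.succ).mulVec (alphabet s - μbar) i)).1
  have hInt : ∀ (l : Fin (K + 1) ⊕ Fin K) (i : Fin S), Integrable (fun ω => Z l ω i) P := by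
    rintro (κ | κ) i
    · exact hIntL κ i
    · exact hIntR κ i
  -- zero mean of the pieces
  have hZeroL : ∀ (κ : Fin (K + 1)) (i : Fin S), ∫ ω, Z (Sum.inl κ) ω i ∂P = 0 := by
    intro κ i
    rw [hZL, integral_finset_sum _ fun a _ => (hBint κ a).const_mul _]
    refine Finset.sum_eq_zero fun a _ => ?_
    rw [integral_const_mul _ _, integral_sub ((hNoise2 κ a).integrable one_le_two)
      (integrable_const _), hNmean κ a, integral_const]
    simp
  have hμa : ∀ a : Fin S, ∑ s : Fin N, (alphabet s a - μbar a) = 0 := by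
    intro a
    have hNR : (N : ℝ) ≠ 0 := Nat.cast_ne_zero.2 (by omega)
    have h1 : μbar a = (N : ℝ)⁻¹ * ∑ s, alphabet s a := by
      rw [hμbar]; simp [Finset.sum_apply]
    rw [Finset.sum_sub_distrib, Finset.sum_const, Finset.card_univ, Fintype.card_fin,
      nsmul_eq_mul, h1]
    field_simp
    simp
  have hZeroR : ∀ (κ : Fin K) (i : Fin S), ∫ ω, Z (Sum.inr κ) ω i ∂P = 0 := by
    intro κ i
    rw [hZR, (integral_comp_uniform hN (Sig κ) (hSigUnif κ)
      (fun s => (H κ.succ).mulVec (alphabet s - μbar) i)).2]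
    have hz : ∑ s : Fin N, (H κ.succ).mulVec (alphabet s - μbar) i = 0 := by
      simp only [hmulVecApply]
      rw [Finset.sum_comm]
      refine Finset.sum_eq_zero fun a _ => ?_
      have : ∀ s : Fin N, H κ.succ i a * ((alphabet s - μbar) a)
          = H κ.succ i a * (alphabet s a - μbar a) := fun s => rfl
      rw [Finset.sum_congr rfl fun s _ => this s, ← Finset.mul_sum, hμa a, mul_zero]
    rw [hz, mul_zero]
  have hZero : ∀ (l : Fin (K + 1) ⊕ Fin K) (i : Fin S), ∫ ω, Z l ω i ∂P = 0 := by
    rintro (κ | κ) i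
    · exact hZeroL κ i
    · exact hZeroR κ i
  -- independence of distinct pieces
  have hmeasL : ∀ (κ : Fin (K + 1)) (i : Fin S),
      Measurable (fun v : Fin S → ℝ => (H κ).mulVec (v - μTX) i) := by
    intro κ i
    have he : (fun v : Fin S → ℝ => (H κ).mulVec (v - μTX) i)
        = fun v => ∑ a, H κ i a * (v a - μTX a) := by
      funext v; exact hmulVecApply _ _ _
    rw [he]
    exact Finset.measurable_sum _ fun a _ =>
      ((measurable_pi_apply a).sub measurable_const).const_mul _
  have hindepZ : ∀ l l', l ≠ l' → ∀ i j : Fin S,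
      IndepFun (fun ω => Z l ω i) (fun ω => Z l' ω j) P := by
    rintro (κ | κ) (κ' | κ') hll i j
    · exact (hindep.indepFun hll).comp (hmeasL κ i) (hmeasL κ' j)
    · exact (hindep.indepFun hll).comp (hmeasL κ i)
        (measurable_of_countable (fun s : Fin N => (H κ'.succ).mulVec (alphabet s - μbar) j))
    · exact (hindep.indepFun hll).comp
        (measurable_of_countable (fun s : Fin N => (H κ.succ).mulVec (alphabet s - μbar) i))
        (hmeasL κ' j)
    · exact (hindep.indepFun hll).comp
        (measurable_of_countable (fun s : Fin N => (H κ.succ).mulVec (alphabet s - μbar) i))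
        (measurable_of_countable (fun s : Fin N => (H κ'.succ).mulVec (alphabet s - μbar) j))
  -- diagonal second moments
  have hDiag : ∀ (l : Fin (K + 1) ⊕ Fin K) (i j : Fin S),
      ∫ ω, Z l ω i * Z l ω j ∂P = Cm l i j := by
    rintro (κ | κ) i j
    · have hptw : (fun ω => Z (Sum.inl κ) ω i * Z (Sum.inl κ) ω j)
          = fun ω => ∑ a, ∑ b, H κ i a * H κ j b
              * ((Noise κ ω a - μTX a) * (Noise κ ω b - μTX b)) := by
        funext ω
        rw [congrFun (hZL κ i) ω, congrFun (hZL κ j) ω, Finset.sum_mul_sum]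
        exact Finset.sum_congr rfl fun a _ => Finset.sum_congr rfl fun b _ => by ring
      have h1 : ∫ ω, (∑ a, ∑ b, H κ i a * H κ j b
            * ((Noise κ ω a - μTX a) * (Noise κ ω b - μTX b))) ∂P
          = ∑ a, ∑ b, H κ i a * H κ j b * CTX a b := by
        rw [integral_finset_sum _ fun a _ =>
          integrable_finset_sum _ fun b _ => (hBBint κ κ a b).const_mul _]
        refine Finset.sum_congr rfl fun a _ => ?_
        rw [integral_finset_sum _ fun b _ => (hBBint κ κ a b).const_mul _]
        refine Finset.sum_congr rfl fun b _ => ?_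
        rw [integral_const_mul _ _, hNcov κ a b]
      rw [hptw, h1]
      show _ = (H κ * CTX * (H κ)ᵀ) i j
      exact (matrix_quad (H κ) CTX i j).symm
    · have heq : (fun ω => Z (Sum.inr κ) ω i * Z (Sum.inr κ) ω j)
          = fun ω => (fun s => (H κ.succ).mulVec (alphabet s - μbar) i
              * (H κ.succ).mulVec (alphabet s - μbar) j) (Sig κ ω) := by
        funext ω; rfl
      rw [heq, (integral_comp_uniform hN (Sig κ) (hSigUnif κ)
        (fun s => (H κ.succ).mulVec (alphabet s - μbar) i
          * (H κ.succ).mulVec (alphabet s - μbar) j)).2]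
      show _ = (H κ.succ * Csym * (H κ.succ)ᵀ) i j
      rw [hCsym]
      exact (matrix_quad_smul (H κ.succ) (N : ℝ)⁻¹ (fun s => alphabet s - μbar) i j).symm
  -- integrability of all products
  have hIntMul : ∀ (l l' : Fin (K + 1) ⊕ Fin K) (i j : Fin S),
      Integrable (fun ω => Z l ω i * Z l' ω j) P := by
    intro l l' i j
    by_cases hll : l = l'
    · subst hll
      match l with
      | Sum.inl κ =>
        have h3 : MemLp ((fun ω => Z (Sum.inl κ) ω i) • fun ω => Z (Sum.inl κ) ω j) 1 P :=
          (hZmemL κ j).smul (hZmemL κ i)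
        exact memLp_one_iff_integrable.1 h3
      | Sum.inr κ =>
        have h := (integral_comp_uniform hN (Sig κ) (hSigUnif κ)
          (fun s => (H κ.succ).mulVec (alphabet s - μbar) i
            * (H κ.succ).mulVec (alphabet s - μbar) j)).1
        have heq : (fun ω => Z (Sum.inr κ) ω i * Z (Sum.inr κ) ω j)
            = fun ω => (fun s => (H κ.succ).mulVec (alphabet s - μbar) i
              * (H κ.succ).mulVec (alphabet s - μbar) j) (Sig κ ω) := by
          funext ω; rfl
        rw [heq]; exact h
    · have h := (hindepZ l l' hll i j).integrable_mul (hInt l i) (hInt l' j)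
      exact h
  -- cross moments vanish
  have hCross : ∀ l l', l ≠ l' → ∀ i j : Fin S, ∫ ω, Z l ω i * Z l' ω j ∂P = 0 := by
    intro l l' hll i j
    have h := (hindepZ l l' hll i j).integral_mul_eq_mul_integral (hInt l i).aestronglyMeasurable
      (hInt l' j).aestronglyMeasurable
    have heq : ∫ ω, Z l ω i * Z l' ω j ∂P
        = ∫ ω, ((fun ω => Z l ω i) * fun ω => Z l' ω j) ω ∂P := rfl
    rw [heq, h, hZero l i, zero_mul]
  -- the mean
  have hmean : vmean P Yf = m := by
    funext i
    have : vmean P Yf i = ∫ ω, (m i + ∑ l, Z l ω i) ∂P := by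
      rw [hYdecomp]
      simp only [vmean]
      congr 1
      funext ω
      simp [Finset.sum_apply]
    rw [this, integral_add (integrable_const _)
      (integrable_finset_sum _ fun l _ => hInt l i),
      integral_finset_sum _ fun l _ => hInt l i]
    simp [hZero]
  refine ⟨hmean, ?_⟩
  -- the covariance
  have hcov : vcov P Yf = ∑ κ : Fin (K + 1), H κ * CTX * (H κ)ᵀ +
      ∑ κ : Fin K, H κ.succ * Csym * (H κ.succ)ᵀ := by
    ext i j
    show (∫ ω, (Yf ω i - vmean P Yf i) * (Yf ω j - vmean P Yf j) ∂P) = _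
    rw [hmean]
    have hYi : ∀ (ω : Ω) (i : Fin S), Yf ω i - m i = ∑ l, Z l ω i := by
      intro ω i
      rw [hYdecomp]
      simp [Finset.sum_apply]
    have hintg : (fun ω => (Yf ω i - m i) * (Yf ω j - m j))
        = fun ω => ∑ l, ∑ l', Z l ω i * Z l' ω j := by
      funext ω
      rw [hYi, hYi, Finset.sum_mul_sum]
    rw [hintg,
      integral_finset_sum _ fun l _ => integrable_finset_sum _ fun l' _ => hIntMul l l' i j]
    have hstep : ∀ l : Fin (K + 1) ⊕ Fin K,
        ∫ ω, (∑ l', Z l ω i * Z l' ω j) ∂P = Cm l i j := by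
      intro l
      rw [integral_finset_sum _ fun l' _ => hIntMul l l' i j]
      have hite : ∀ l' ∈ (Finset.univ : Finset (Fin (K + 1) ⊕ Fin K)),
          ∫ ω, Z l ω i * Z l' ω j ∂P = if l' = l then Cm l i j else 0 := by
        intro l' _
        by_cases h : l' = l
        · subst h; rw [if_pos rfl]; exact hDiag l' i j
        · rw [if_neg h]; exact hCross l l' (Ne.symm h) i j
      rw [Finset.sum_congr rfl hite, Finset.sum_ite_eq' Finset.univ l fun _ => Cm l i j]
      simp
    rw [Finset.sum_congr rfl fun l _ => hstep l, Fintype.sum_sum_type]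
    rw [hCm]
    simp [Matrix.sum_apply]
  exact hcov
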